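/- The ring of entire functions on ℂ contains a strictly decreasing chain of prime ideals indexed by a set of cardinality continuum; in particular, its Krull dimension is at least the cardinality of the continuum. -/

import Mathlib

open Filter

/-- The ring of entire functions, as a subring of all functions `ℂ → ℂ` with
pointwise operations. -/
def entireRing : Subring (ℂ → ℂ) where
  carrier := {f | Differentiable ℂ f}
  mul_mem' hf hg := hf.mul hg
  one_mem' := differentiable_const 1
  add_mem' hf hg := hf.add hg
  zero_mem' := differentiable_const 0
  neg_mem' hf := hf.neg

namespace ChainAux

open Filter Complex Finset Metric

variable {f g : ℂ → ℂ} {p : ℂ}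

lemma order_toNat (hf : AnalyticAt ℂ f p) (h : analyticOrderAt f p ≠ ⊤) : ∃ k : ℕ, analyticOrderAt f p = k :=
  ⟨(analyticOrderAt f p).toNat, (ENat.natCast_toNat h).symm⟩

lemma le_order_of_factor (hf : AnalyticAt ℂ f p) (hg : AnalyticAt ℂ g p) {n : ℕ}
    (hfg : ∀ᶠ z in nhds p, f z = (z - p) ^ n * g z) : (n : ℕ∞) ≤ analyticOrderAt f p := by
  by_cases h0 : ∀ᶠ z in nhds p, f z = 0
  · rw [analyticOrderAt_eq_top.2 h0]; exact le_top
  · obtain ⟨k, hk⟩ := order_toNat hf (fun ht => h0 (analyticOrderAt_eq_top.1 ht))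
    rw [hk]
    norm_cast
    by_contra hlt
    push_neg at hlt
    obtain ⟨h1, ha, hne, heq⟩ := hf.analyticOrderAt_eq_natCast.1 hk
    have hev : ∀ᶠ z in nhdsWithin p {p}ᶜ, h1 z = (z - p) ^ (n - k) * g z := by
      filter_upwards [nhdsWithin_le_nhds heq, nhdsWithin_le_nhds hfg,
        self_mem_nhdsWithin] with z hz1 hz2 (hz3 : z ≠ p)
      have hzp : (z - p) ^ k ≠ 0 := pow_ne_zero _ (sub_ne_zero.2 hz3)
      have : (z - p) ^ k * h1 z = (z - p) ^ k * ((z - p) ^ (n - k) * g z) := by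
        rw [← mul_assoc, ← pow_add, Nat.add_sub_cancel' hlt.le]
        rw [smul_eq_mul] at hz1
        rw [← hz1, ← hz2]
      exact mul_left_cancel₀ hzp this
    have htend1 : Filter.Tendsto h1 (nhdsWithin p {p}ᶜ) (nhds (h1 p)) :=
      (ha.continuousAt.continuousWithinAt).tendsto
    have htend2 : Filter.Tendsto (fun z => (z - p) ^ (n - k) * g z) (nhdsWithin p {p}ᶜ)
        (nhds ((p - p) ^ (n - k) * g p)) := by
      exact (((continuousAt_id.sub continuousAt_const).pow _).mul
        hg.continuousAt).continuousWithinAt.tendsto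
    have := tendsto_nhds_unique (htend1.congr' hev) htend2
    rw [sub_self, zero_pow (Nat.sub_ne_zero_of_lt hlt), zero_mul] at this
    exact hne this

lemma exists_factor_of_le_order (hf : AnalyticAt ℂ f p) {n : ℕ} (h : (n : ℕ∞) ≤ analyticOrderAt f p) :
    ∃ h1 : ℂ → ℂ, AnalyticAt ℂ h1 p ∧ ∀ᶠ z in nhds p, f z = (z - p) ^ n * h1 z := by
  by_cases htop : analyticOrderAt f p = ⊤
  · exact ⟨0, analyticAt_const, by
      filter_upwards [analyticOrderAt_eq_top.1 htop] with z hz; simp [hz]⟩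
  · obtain ⟨k, hk⟩ := order_toNat hf htop
    have hnk : n ≤ k := by rw [hk] at h; exact_mod_cast h
    obtain ⟨h1, ha, _, heq⟩ := hf.analyticOrderAt_eq_natCast.1 hk
    refine ⟨fun z => (z - p) ^ (k - n) * h1 z,
      (((analyticAt_id).sub analyticAt_const).pow _).mul ha, ?_⟩
    filter_upwards [heq] with z hz
    rw [hz, smul_eq_mul, ← mul_assoc, ← pow_add, Nat.add_sub_cancel' hnk]

lemma min_le_order_add (hf : AnalyticAt ℂ f p) (hg : AnalyticAt ℂ g p) :
    min (analyticOrderAt f p) (analyticOrderAt g p) ≤ analyticOrderAt (f + g) p := by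
  by_cases htop : min (analyticOrderAt f p) (analyticOrderAt g p) = ⊤
  · rw [(analyticOrderAt_eq_top (f := f + g)).2 ?_, htop]
    have h1 := analyticOrderAt_eq_top.1 (min_eq_top.1 htop).1
    have h2 := analyticOrderAt_eq_top.1 (min_eq_top.1 htop).2
    filter_upwards [h1, h2] with z hz1 hz2
    simp only [Pi.add_apply, hz1, hz2, add_zero]
  · have : ∃ k : ℕ, (min (analyticOrderAt f p) (analyticOrderAt g p)) = k :=
      ⟨_, (ENat.natCast_toNat htop).symm⟩
    obtain ⟨k, hk⟩ := this
    obtain ⟨a, haA, ha⟩ := exists_factor_of_le_order hf (hk ▸ min_le_left _ _ : (k : ℕ∞) ≤ _)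
    obtain ⟨b, hbA, hb⟩ := exists_factor_of_le_order hg (hk ▸ min_le_right _ _ : (k : ℕ∞) ≤ _)
    rw [hk]
    refine le_order_of_factor (hf.add hg) (haA.add hbA) ?_
    filter_upwards [ha, hb] with z hz1 hz2
    simp only [Pi.add_apply, hz1, hz2, mul_add]

lemma order_mul (hf : AnalyticAt ℂ f p) (hg : AnalyticAt ℂ g p) :
    analyticOrderAt (f * g) p = analyticOrderAt f p + analyticOrderAt g p := by
  by_cases h1 : ∀ᶠ z in nhds p, f z = 0
  · rw [analyticOrderAt_eq_top.2 h1, top_add, (analyticOrderAt_eq_top (f := f * g)).2 ?_]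
    filter_upwards [h1] with z hz
    simp [hz]
  by_cases h2 : ∀ᶠ z in nhds p, g z = 0
  · rw [analyticOrderAt_eq_top.2 h2, add_top, (analyticOrderAt_eq_top (f := f * g)).2 ?_]
    filter_upwards [h2] with z hz
    simp [hz]
  obtain ⟨k, hk⟩ := order_toNat hf (fun ht => h1 (analyticOrderAt_eq_top.1 ht))
  obtain ⟨l, hl⟩ := order_toNat hg (fun ht => h2 (analyticOrderAt_eq_top.1 ht))
  obtain ⟨a, haA, haN, ha⟩ := hf.analyticOrderAt_eq_natCast.1 hk
  obtain ⟨b, hbA, hbN, hb⟩ := hg.analyticOrderAt_eq_natCast.1 hl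
  rw [hk, hl, ← Nat.cast_add]
  refine (hf.mul hg).analyticOrderAt_eq_natCast.2 ⟨fun z => a z * b z, haA.mul hbA,
    mul_ne_zero haN hbN, ?_⟩
  filter_upwards [ha, hb] with z hz1 hz2
  simp only [smul_eq_mul, Pi.mul_apply] at hz1 hz2 ⊢
  rw [hz1, hz2, pow_add]
  ring

lemma order_const {c : ℂ} (hc : c ≠ 0) (h : AnalyticAt ℂ (fun _ : ℂ => c) p) :
    analyticOrderAt (fun _ : ℂ => c) p = 0 := by
  refine (h.analyticOrderAt_eq_natCast (n := 0)).2 ⟨fun _ => c, analyticAt_const, hc, ?_⟩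
  filter_upwards with z
  simp


noncomputable def ex (r : ℝ) (m : ℕ) : ℕ := Nat.floor (((2:ℝ) ^ r) ^ m)

lemma one_le_two_rpow {r : ℝ} (hr : 0 ≤ r) : (1:ℝ) ≤ (2:ℝ) ^ r := by
  rw [show (1:ℝ) = (2:ℝ) ^ (0:ℝ) by simp]
  exact Real.rpow_le_rpow_of_exponent_le (by norm_num) hr

lemma one_le_ex {r : ℝ} (hr : 0 ≤ r) (m : ℕ) : 1 ≤ ex r m :=
  Nat.one_le_floor_iff _ |>.2 (one_le_pow₀ (one_le_two_rpow hr))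

lemma ex_le {r : ℝ} (m : ℕ) : (ex r m : ℝ) ≤ ((2:ℝ) ^ r) ^ m :=
  Nat.floor_le (by positivity)

noncomputable def u (r : ℝ) (m : ℕ) (z : ℂ) : ℂ := (1 - z / 2 ^ m) ^ ex r m

noncomputable def FF (r : ℝ) (z : ℂ) : ℂ := ∏' m, u r m z

noncomputable def del (r R : ℝ) (m : ℕ) : ℝ := (ex r m : ℝ) * R / 2 ^ m

lemma del_nonneg {r R : ℝ} (hR : 0 ≤ R) (m : ℕ) : 0 ≤ del r R m := by
  unfold del; positivity

lemma summable_del {r : ℝ} (hr : r < 1) {R : ℝ} (hR : 0 ≤ R) : Summable (del r R) := by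
  have h2 : (2:ℝ) ^ r < 2 := by
    nth_rewrite 2 [show (2:ℝ) = (2:ℝ) ^ (1:ℝ) by simp]
    exact Real.rpow_lt_rpow_of_exponent_lt (by norm_num) hr
  have hq0 : 0 ≤ (2:ℝ) ^ r / 2 := by positivity
  have hq1 : (2:ℝ) ^ r / 2 < 1 := (div_lt_one (by norm_num)).2 h2
  refine ((summable_geometric_of_lt_one hq0 hq1).mul_left R).of_nonneg_of_le
    (del_nonneg hR) fun m => ?_
  have h1 : (ex r m : ℝ) ≤ ((2:ℝ) ^ r) ^ m := ex_le m
  have : del r R m ≤ ((2:ℝ) ^ r) ^ m * R / 2 ^ m := by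
    unfold del; gcongr
  refine this.trans (le_of_eq ?_)
  rw [div_pow]; ring

/-- `‖(1-w)^n - 1‖ ≤ (1+‖w‖)^n - 1` -/
lemma norm_pow_sub_one_le (w : ℂ) : ∀ n : ℕ, ‖(1 - w) ^ n - 1‖ ≤ (1 + ‖w‖) ^ n - 1
  | 0 => by simp
  | (n+1) => by
    have ih := norm_pow_sub_one_le w n
    have h1 : (1 - w) ^ (n+1) - 1 = (1 - w) ^ n * (-w) + ((1 - w) ^ n - 1) := by ring
    rw [h1]
    have h2 : ‖(1 - w) ^ n * (-w)‖ ≤ (1 + ‖w‖) ^ n * ‖w‖ := by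
      rw [norm_mul, norm_pow, norm_neg]
      gcongr
      calc ‖1 - w‖ ≤ ‖(1:ℂ)‖ + ‖w‖ := norm_sub_le _ _
        _ = 1 + ‖w‖ := by simp
    calc ‖(1 - w) ^ n * (-w) + ((1 - w) ^ n - 1)‖
        ≤ ‖(1 - w) ^ n * (-w)‖ + ‖(1 - w) ^ n - 1‖ := norm_add_le _ _
      _ ≤ (1 + ‖w‖) ^ n * ‖w‖ + ((1 + ‖w‖) ^ n - 1) := by gcongr
      _ = (1 + ‖w‖) ^ n * (1 + ‖w‖) - 1 := by ring
      _ = (1 + ‖w‖) ^ (n+1) - 1 := by rw [← pow_succ]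

lemma exp_sub_one_le {t : ℝ} (h0 : 0 ≤ t) (h8 : t ≤ 1/8) : Real.exp t - 1 ≤ 2 * t := by
  have h1 : (1 - t) * Real.exp t ≤ 1 := by
    have := Real.add_one_le_exp (-t)
    have h2 : (-t + 1) * Real.exp t ≤ Real.exp (-t) * Real.exp t := by
      apply mul_le_mul_of_nonneg_right this (Real.exp_pos t).le
    rwa [← Real.exp_add, neg_add_cancel, Real.exp_zero, show -t + 1 = 1 - t by ring] at h2
  have h3 : Real.exp t ≤ 8/7 := by
    have h4 : (7:ℝ)/8 ≤ 1 - t := by linarith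
    nlinarith [Real.exp_pos t]
  nlinarith [Real.exp_pos t]

lemma two_pow_pos (m : ℕ) : (0:ℝ) < 2 ^ m := by positivity

lemma norm_div_two_pow (z : ℂ) (m : ℕ) : ‖z / 2 ^ m‖ = ‖z‖ / 2 ^ m := by
  rw [norm_div, norm_pow]
  norm_num

/-- key bound on each factor -/
lemma u_sub_one_norm_le {r R : ℝ} (hR : 0 ≤ R) {m : ℕ} (hm : del r R m ≤ 1/8)
    {z : ℂ} (hz : ‖z‖ ≤ R) : ‖u r m z - 1‖ ≤ 2 * del r R m := by
  have hw : ‖z / 2 ^ m‖ ≤ R / 2 ^ m := by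
    rw [norm_div_two_pow]; gcongr
  have h0 : (0:ℝ) ≤ ‖z / 2 ^ m‖ := norm_nonneg _
  have h1 : ‖u r m z - 1‖ ≤ (1 + ‖z / 2 ^ m‖) ^ ex r m - 1 := norm_pow_sub_one_le _ _
  have h2 : (1 + ‖z / 2 ^ m‖) ^ ex r m ≤ Real.exp ((ex r m : ℝ) * ‖z / 2 ^ m‖) := by
    rw [Real.exp_nat_mul]
    exact pow_le_pow_left₀ (by positivity)
      (by linarith [Real.add_one_le_exp ‖z / 2 ^ m‖]) _
  have h3 : (ex r m : ℝ) * ‖z / 2 ^ m‖ ≤ del r R m := by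
    rw [norm_div_two_pow, ← mul_div_assoc]
    unfold del
    gcongr
  have h4 : Real.exp ((ex r m : ℝ) * ‖z / 2 ^ m‖) ≤ Real.exp (del r R m) := by
    exact Real.exp_le_exp.2 h3
  have h5 := exp_sub_one_le (le_trans (by positivity) h3 : (0:ℝ) ≤ del r R m) hm
  linarith

section Local

variable {r R : ℝ} {N : ℕ}

/-- tail log sum -/
noncomputable def TL (r : ℝ) (N : ℕ) (z : ℂ) : ℂ := ∑' i, Complex.log (u r (i + N) z)

lemma norm_le_of_mem_closedBall {R : ℝ} {z : ℂ} (hz : z ∈ closedBall (0:ℂ) R) : ‖z‖ ≤ R := by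
  rwa [mem_closedBall, dist_zero_right] at hz

variable (hR : 0 < R) (hN : ∀ m, N ≤ m → del r R m ≤ 1/8)

include hR hN in
lemma u_close {m : ℕ} (hm : N ≤ m) {z : ℂ} (hz : ‖z‖ ≤ R) : ‖u r m z - 1‖ ≤ 1/4 :=
  (u_sub_one_norm_le hR.le (hN m hm) hz).trans (by linarith [hN m hm])

include hR hN in
lemma u_re {m : ℕ} (hm : N ≤ m) {z : ℂ} (hz : ‖z‖ ≤ R) : 0 < (u r m z).re := by
  have h := u_close hR hN hm hz
  have h2 : |(u r m z - 1).re| ≤ ‖u r m z - 1‖ := by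
    exact Complex.abs_re_le_norm _
  have h3 : (u r m z - 1).re = (u r m z).re - 1 := by simp
  rw [h3] at h2
  have := abs_le.1 h2
  linarith [this.1]

include hR hN in
lemma u_ne {m : ℕ} (hm : N ≤ m) {z : ℂ} (hz : ‖z‖ ≤ R) : u r m z ≠ 0 := by
  intro h
  have := u_close hR hN hm hz
  rw [h] at this
  norm_num at this

include hR hN in
lemma log_u_norm {m : ℕ} (hm : N ≤ m) {z : ℂ} (hz : ‖z‖ ≤ R) :
    ‖Complex.log (u r m z)‖ ≤ 3 * del r R m := by
  have h1 : ‖u r m z - 1‖ ≤ 1/2 := (u_close hR hN hm hz).trans (by norm_num)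
  have h2 := Complex.norm_log_one_add_half_le_self h1
  rw [show (1:ℂ) + (u r m z - 1) = u r m z by ring] at h2
  have := u_sub_one_norm_le hR.le (hN m hm) hz
  linarith

variable (hr : r < 1)

include hr hR in
lemma summable_del_tail : Summable (fun i => 3 * del r R (i + N)) :=
  (((summable_nat_add_iff N).2 (summable_del hr hR.le))).mul_left 3

include hR hN hr in
lemma summable_log {z : ℂ} (hz : ‖z‖ ≤ R) :
    Summable fun i => Complex.log (u r (i + N) z) := by
  refine Summable.of_norm_bounded
    (summable_del_tail (N := N) hR hr) fun i => ?_
  exact log_u_norm hR hN (Nat.le_add_left N i) hz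

include hR hN hr in
lemma hasProd_tail {z : ℂ} (hz : z ∈ closedBall (0:ℂ) R) :
    HasProd (fun i => u r (i + N) z) (Complex.exp (TL r N z)) := by
  have hzn : ∀ (x : closedBall (0:ℂ) R), ∀ n : ℕ, u r (n + N) x.val ≠ 0 := by
    intro x n
    exact u_ne hR hN (Nat.le_add_left N n) (norm_le_of_mem_closedBall x.2)
  have hsm : ∀ (x : closedBall (0:ℂ) R),
      Summable fun n : ℕ => Complex.log (u r (n + N) x.val) := fun x =>
    summable_log hR hN hr (norm_le_of_mem_closedBall x.2)
  have h1 := Complex.hasProd_of_hasSum_log (f := fun n => u r (n + N) z)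
    (hzn ⟨z, hz⟩) (hsm ⟨z, hz⟩).hasSum
  rw [show TL r N z = ∑' (n : ℕ), Complex.log (u r (n + N) z) from rfl]
  exact h1

include hR hN hr in
lemma hasProd_FF {z : ℂ} (hz : z ∈ closedBall (0:ℂ) R) :
    HasProd (fun m => u r m z)
      ((∏ i ∈ range N, u r i z) * Complex.exp (TL r N z)) := by
  have htail := hasProd_tail hR hN hr hz
  have hcpl : IsCompl (Set.Iio N) (Set.Ici N) := by
    rw [← Set.compl_Iio]; exact isCompl_compl
  let e1 : (range N : Finset ℕ) ≃ (Set.Iio N) :=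
    ⟨fun x => ⟨x.1, Finset.mem_range.1 x.2⟩, fun x => ⟨x.1, Finset.mem_range.2 x.2⟩,
      fun x => rfl, fun x => rfl⟩
  have ha : HasProd ((fun m => u r m z) ∘ (↑) : (Set.Iio N) → ℂ)
      (∏ i ∈ range N, u r i z) :=
    e1.hasProd_iff.1 ((range N).hasProd (fun m => u r m z))
  let e2 : ℕ ≃ (Set.Ici N) :=
    ⟨fun i => ⟨i + N, Nat.le_add_left N i⟩, fun x => x.1 - N,
      fun i => by simp, fun x => Subtype.ext (Nat.sub_add_cancel x.2)⟩
  have hb : HasProd ((fun m => u r m z) ∘ (↑) : (Set.Ici N) → ℂ)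
      (Complex.exp (TL r N z)) := e2.hasProd_iff.1 htail
  exact HasProd.mul_isCompl hcpl ha hb

include hR hN hr in
lemma multipliable_u {z : ℂ} (hz : z ∈ closedBall (0:ℂ) R) :
    Multipliable fun m => u r m z :=
  (hasProd_FF hR hN hr hz).multipliable

include hR hN hr in
lemma FF_eq {z : ℂ} (hz : z ∈ closedBall (0:ℂ) R) :
    FF r z = (∏ i ∈ range N, u r i z) * Complex.exp (TL r N z) :=
  (hasProd_FF hR hN hr hz).tprod_eq

lemma u_differentiable (m : ℕ) : Differentiable ℂ (u r m) := by
  unfold u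
  apply Differentiable.pow
  exact (differentiable_id.div_const _).const_sub 1

include hR hN hr in
lemma TL_differentiableOn : DifferentiableOn ℂ (TL r N) (ball (0:ℂ) R) := by
  have huc := tendstoUniformlyOn_tsum (summable_del_tail (N := N) hR hr)
    (f := fun i z => Complex.log (u r (i + N) z)) (s := closedBall (0:ℂ) R)
    (fun n x hx => log_u_norm hR hN (Nat.le_add_left N n)
      (norm_le_of_mem_closedBall hx))
  apply TendstoLocallyUniformlyOn.differentiableOn
    ((huc.mono ball_subset_closedBall).tendstoLocallyUniformlyOn)
  · filter_upwards with t
    apply DifferentiableOn.fun_sum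
    intro i _
    intro x hx
    have hxR : ‖x‖ ≤ R := le_of_lt (by simpa [mem_ball, dist_eq_norm] using hx)
    refine DifferentiableAt.differentiableWithinAt ?_
    refine DifferentiableAt.clog (u_differentiable (i + N)).differentiableAt ?_
    exact Complex.mem_slitPlane_iff.2 (Or.inl (u_re hR hN (Nat.le_add_left N i) hxR))
  · exact isOpen_ball

lemma head_differentiable (t : Finset ℕ) :
    Differentiable ℂ (fun z => ∏ i ∈ t, u r i z) := by
  classical
  induction t using Finset.induction with
  | empty => simpa using differentiable_const (1:ℂ)
  | insert a s h ih =>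
    simp only [Finset.prod_insert h]
    exact (u_differentiable _).mul ih

include hR hN hr in
lemma FF_differentiableOn : DifferentiableOn ℂ (FF r) (ball (0:ℂ) R) := by
  refine DifferentiableOn.congr
    (f := fun z => (∏ i ∈ range N, u r i z) * Complex.exp (TL r N z)) ?_ ?_
  · exact ((head_differentiable _).differentiableOn).mul (TL_differentiableOn hR hN hr).cexp
  · intro x hx
    exact FF_eq hR hN hr (ball_subset_closedBall hx)

end Local

lemma exists_N {r R : ℝ} (hr : r < 1) (hR : 0 ≤ R) :
    ∃ N : ℕ, ∀ m, N ≤ m → del r R m ≤ 1/8 := by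
  have := (summable_del hr hR).tendsto_atTop_zero
  have h := this.eventually_le_const (show (0:ℝ) < 1/8 by norm_num)
  exact eventually_atTop.1 h

lemma FF_differentiable {r : ℝ} (hr : r < 1) : Differentiable ℂ (FF r) := by
  intro z
  obtain ⟨N, hN⟩ := exists_N hr (show (0:ℝ) ≤ ‖z‖ + 1 by positivity)
  have hR : (0:ℝ) < ‖z‖ + 1 := by positivity
  exact (FF_differentiableOn hR hN hr).differentiableAt
    (isOpen_ball.mem_nhds (by simp [mem_ball, dist_eq_norm]))


lemma two_pow_ne_zero' (M : ℕ) : ((2:ℂ)) ^ M ≠ 0 := pow_ne_zero _ two_ne_zero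

lemma two_pow_injective {M i : ℕ} (h : (2:ℂ) ^ M = (2:ℂ) ^ i) : M = i := by
  have h' : (2:ℝ) ^ M = 2 ^ i := by exact_mod_cast h
  exact pow_right_injective₀ (by norm_num) (by norm_num) h'

lemma norm_two_pow (M : ℕ) : ‖(2:ℂ) ^ M‖ = 2 ^ M := by
  rw [norm_pow]
  norm_num

lemma FF_order {r : ℝ} (hr0 : 0 ≤ r) (hr : r < 1) (M : ℕ) :
    analyticOrderAt (FF r) ((2:ℂ) ^ M) = (ex r M : ℕ∞) := by
  set p : ℂ := (2:ℂ) ^ M with hp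
  set R : ℝ := 2 ^ M + 1 with hR'
  have hR : (0:ℝ) < R := by positivity
  obtain ⟨N', hN'⟩ := exists_N hr hR.le
  set N : ℕ := max (M + 1) N' with hNdef
  have hN : ∀ m, N ≤ m → del r R m ≤ 1/8 := fun m hm =>
    hN' m (le_trans (le_max_right _ _) hm)
  have hMN : M < N := lt_of_lt_of_le (Nat.lt_succ_self M) (le_max_left _ _)
  have hpball : p ∈ ball (0:ℂ) R := by
    rw [mem_ball, dist_zero_right, norm_two_pow]
    simp [hR']
  have hexpA : AnalyticAt ℂ (fun z => Complex.exp (TL r N z)) p :=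
    ((TL_differentiableOn hR hN hr).cexp).analyticAt (isOpen_ball.mem_nhds hpball)
  set c : ℂ := (-(1:ℂ) / 2 ^ M) ^ ex r M with hc
  set g0 : ℂ → ℂ := fun z =>
    c * ((∏ i ∈ (range N).erase M, u r i z) * Complex.exp (TL r N z)) with hg0
  have hg0A : AnalyticAt ℂ g0 p :=
    analyticAt_const.mul
      ((((head_differentiable ((range N).erase M)).analyticAt p)).mul hexpA)
  have hg0ne : g0 p ≠ 0 := by
    refine mul_ne_zero ?_ (mul_ne_zero ?_ (Complex.exp_ne_zero _))
    · exact pow_ne_zero _ (by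
        simp only [ne_eq, div_eq_zero_iff, neg_eq_zero, one_ne_zero, false_or]
        exact two_pow_ne_zero' M)
    · rw [Finset.prod_ne_zero_iff]
      intro i hi
      have hiM : i ≠ M := (Finset.mem_erase.1 hi).1
      apply pow_ne_zero
      rw [sub_ne_zero]
      intro h
      apply hiM
      have h2i : ((2:ℂ)) ^ i ≠ 0 := two_pow_ne_zero' i
      have : (2:ℂ) ^ i = (2:ℂ) ^ M := by
        field_simp [hp] at h
        linear_combination h
      exact two_pow_injective this
  refine (((FF_differentiable hr).analyticAt p).analyticOrderAt_eq_natCast (n := ex r M)).2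
    ⟨g0, hg0A, hg0ne, ?_⟩
  refine Filter.eventually_of_mem (isOpen_ball.mem_nhds hpball) fun z hz => ?_
  have hzc : z ∈ closedBall (0:ℂ) R := ball_subset_closedBall hz
  have h1 : FF r z = (∏ i ∈ range N, u r i z) * Complex.exp (TL r N z) :=
    FF_eq hR hN hr hzc
  have h2 : (∏ i ∈ range N, u r i z)
      = u r M z * ∏ i ∈ (range N).erase M, u r i z :=
    (Finset.mul_prod_erase (range N) _ (Finset.mem_range.2 hMN)).symm
  have h3 : (1:ℂ) - z / 2 ^ M = (z - p) * (-(1:ℂ) / 2 ^ M) := by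
    have h2M := two_pow_ne_zero' M
    field_simp [hp]
    rw [hp]; ring
  have h4 : u r M z = (z - p) ^ ex r M * c := by
    rw [show u r M z = ((1:ℂ) - z / 2 ^ M) ^ ex r M from rfl, h3, mul_pow, hc]
  rw [h1, h2, h4, smul_eq_mul, hg0]
  ring


section Ideals

open Filter Complex Finset Metric

noncomputable def ordAt (f : entireRing) (m : ℕ) : ℕ∞ :=
  analyticOrderAt (f : ℂ → ℂ) ((2:ℂ) ^ m)

lemma ordAt_zero (m : ℕ) : ordAt 0 m = ⊤ := by
  refine analyticOrderAt_eq_top.2 ?_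
  exact Filter.Eventually.of_forall fun z => rfl

lemma ordAt_one (m : ℕ) : ordAt 1 m = 0 :=
  order_const one_ne_zero analyticAt_const

lemma ordAt_add (f g : entireRing) (m : ℕ) :
    min (ordAt f m) (ordAt g m) ≤ ordAt (f + g) m :=
  min_le_order_add ((show Differentiable ℂ (f : ℂ → ℂ) from f.2).analyticAt _)
    ((show Differentiable ℂ (g : ℂ → ℂ) from g.2).analyticAt _)

lemma ordAt_mul (f g : entireRing) (m : ℕ) :
    ordAt (f * g) m = ordAt f m + ordAt g m :=
  order_mul ((show Differentiable ℂ (f : ℂ → ℂ) from f.2).analyticAt _)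
    ((show Differentiable ℂ (g : ℂ → ℂ) from g.2).analyticAt _)

/-- The prime ideal associated to the growth rate `r`. -/
noncomputable def chainIdeal (r : ℝ) : Ideal entireRing where
  carrier := {f | ∀ k : ℕ,
    {m | ((k * ex r m : ℕ) : ℕ∞) ≤ ordAt f m} ∈ (Filter.hyperfilter ℕ : Filter ℕ)}
  zero_mem' := by
    intro k
    have : {m | ((k * ex r m : ℕ) : ℕ∞) ≤ ordAt 0 m} = Set.univ := by
      ext m; simp [ordAt_zero]
    rw [this]
    exact Filter.univ_mem
  add_mem' := by
    intro a b ha hb k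
    filter_upwards [ha k, hb k] with m h1 h2
    exact le_trans (le_min h1 h2) (ordAt_add a b m)
  smul_mem' := by
    intro c f hf k
    filter_upwards [hf k] with m h1
    rw [smul_eq_mul, ordAt_mul]
    exact le_add_left h1

lemma mem_chainIdeal_iff {r : ℝ} {f : entireRing} :
    f ∈ chainIdeal r ↔ ∀ k : ℕ,
      {m | ((k * ex r m : ℕ) : ℕ∞) ≤ ordAt f m} ∈ (Filter.hyperfilter ℕ : Filter ℕ) :=
  Iff.rfl

lemma chainIdeal_isPrime {r : ℝ} (hr0 : 0 ≤ r) : (chainIdeal r).IsPrime := by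
  constructor
  · intro h
    have h1 := (Ideal.eq_top_iff_one _).1 h
    have h2 := (mem_chainIdeal_iff.1 h1) 1
    have h3 : {m | ((1 * ex r m : ℕ) : ℕ∞) ≤ ordAt 1 m} = ∅ := by
      ext m
      simp only [Set.mem_setOf_eq, Set.mem_empty_iff_false, iff_false, not_le, ordAt_one]
      have := one_le_ex hr0 m
      have : (0:ℕ∞) < ((1 * ex r m : ℕ) : ℕ∞) := by
        exact_mod_cast Nat.pos_of_ne_zero (by omega)
      exact this
    rw [h3] at h2
    exact Filter.empty_notMem _ h2
  · intro f g hfg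
    by_contra hcon
    push_neg at hcon
    obtain ⟨hf, hg⟩ := hcon
    obtain ⟨k1, hk1⟩ : ∃ k, {m | ((k * ex r m : ℕ) : ℕ∞) ≤ ordAt f m} ∉
        (Filter.hyperfilter ℕ : Filter ℕ) := by
      by_contra h; push_neg at h; exact hf h
    obtain ⟨k2, hk2⟩ : ∃ k, {m | ((k * ex r m : ℕ) : ℕ∞) ≤ ordAt g m} ∉
        (Filter.hyperfilter ℕ : Filter ℕ) := by
      by_contra h; push_neg at h; exact hg h
    have hc1 : {m | ((k1 * ex r m : ℕ) : ℕ∞) ≤ ordAt f m}ᶜ ∈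
        (Filter.hyperfilter ℕ : Filter ℕ) := (Ultrafilter.compl_mem_iff_notMem).2 hk1
    have hc2 : {m | ((k2 * ex r m : ℕ) : ℕ∞) ≤ ordAt g m}ᶜ ∈
        (Filter.hyperfilter ℕ : Filter ℕ) := (Ultrafilter.compl_mem_iff_notMem).2 hk2
    have hmem := (mem_chainIdeal_iff.1 hfg) (k1 + k2)
    have hnon := Filter.nonempty_of_mem (Filter.inter_mem (Filter.inter_mem hmem hc1) hc2)
    obtain ⟨m, ⟨hm0, hm1⟩, hm2⟩ := hnon
    simp only [Set.mem_compl_iff, Set.mem_setOf_eq, not_le] at hm1 hm2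
    have hlt : ordAt f m + ordAt g m <
        ((k1 * ex r m : ℕ) : ℕ∞) + ((k2 * ex r m : ℕ) : ℕ∞) :=
      WithTop.add_lt_add_of_lt_of_le (ne_top_of_lt hm2) hm1 hm2.le
    rw [← ordAt_mul] at hlt
    have : (((k1 + k2) * ex r m : ℕ) : ℕ∞)
        = ((k1 * ex r m : ℕ) : ℕ∞) + ((k2 * ex r m : ℕ) : ℕ∞) := by
      push_cast [add_mul]; rfl
    simp only [Set.mem_setOf_eq] at hm0
    rw [this] at hm0
    exact absurd hm0 (not_le.2 hlt)

lemma ex_mono {r s : ℝ} (hrs : r ≤ s) (m : ℕ) : ex r m ≤ ex s m := by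
  apply Nat.floor_le_floor
  exact pow_le_pow_left₀ (by positivity)
    (Real.rpow_le_rpow_of_exponent_le (by norm_num) hrs) m

lemma chainIdeal_antitone {r s : ℝ} (hrs : r ≤ s) : chainIdeal s ≤ chainIdeal r := by
  intro f hf k
  filter_upwards [mem_chainIdeal_iff.1 hf k] with m h
  refine le_trans ?_ h
  have := ex_mono hrs m
  exact_mod_cast Nat.mul_le_mul_left k this

end Ideals

section Witness

open Filter Complex Finset Metric

noncomputable def FFel (s : ℝ) (hs : s < 1) : entireRing := ⟨FF s, FF_differentiable hs⟩

lemma ordAt_FFel {s : ℝ} (hs0 : 0 ≤ s) (hs1 : s < 1) (m : ℕ) :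
    ordAt (FFel s hs1) m = (ex s m : ℕ∞) := FF_order hs0 hs1 m

lemma FFel_mem {r s : ℝ} (hs0 : 0 ≤ s) (hrs : r < s) (hs1 : s < 1) :
    FFel s hs1 ∈ chainIdeal r := by
  rw [mem_chainIdeal_iff]
  intro k
  apply Nat.hyperfilter_le_atTop
  have hc : 1 < (2:ℝ) ^ (s - r) :=
    (Real.one_lt_rpow_iff_of_pos (by norm_num)).2 (Or.inl ⟨by norm_num, by linarith⟩)
  have hev := (tendsto_pow_atTop_atTop_of_one_lt hc).eventually_ge_atTop (k:ℝ)
  filter_upwards [hev] with m hm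
  rw [ordAt_FFel hs0 hs1, Nat.cast_le]
  apply Nat.le_floor
  push_cast
  calc (k:ℝ) * (ex r m) ≤ (k:ℝ) * ((2:ℝ) ^ r) ^ m := by
        gcongr
        exact ex_le m
    _ ≤ ((2:ℝ) ^ (s - r)) ^ m * ((2:ℝ) ^ r) ^ m := by
        gcongr
    _ = (((2:ℝ) ^ (s - r)) * ((2:ℝ) ^ r)) ^ m := (mul_pow _ _ _).symm
    _ = ((2:ℝ) ^ s) ^ m := by
        rw [← Real.rpow_add (by norm_num : (0:ℝ) < 2)]
        norm_num

lemma FFel_not_mem {s : ℝ} (hs0 : 0 ≤ s) (hs1 : s < 1) : FFel s hs1 ∉ chainIdeal s := by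
  intro h
  have h2 := mem_chainIdeal_iff.1 h 2
  have hemp : {m | ((2 * ex s m : ℕ) : ℕ∞) ≤ ordAt (FFel s hs1) m} = ∅ := by
    ext m
    simp only [Set.mem_setOf_eq, Set.mem_empty_iff_false, iff_false, not_le,
      ordAt_FFel hs0 hs1]
    have h1 := one_le_ex hs0 m
    exact_mod_cast (by omega : ex s m < 2 * ex s m)
  rw [hemp] at h2
  exact Filter.empty_notMem _ h2

lemma chainIdeal_injOn : Set.InjOn chainIdeal (Set.Ioo (0:ℝ) 1) := by
  intro r hr s hs heq
  by_contra hne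
  rcases lt_or_gt_of_ne hne with hlt | hlt
  · have hm := FFel_mem hs.1.le hlt hs.2
    rw [heq] at hm
    exact FFel_not_mem hs.1.le hs.2 hm
  · have hm := FFel_mem hr.1.le hlt hr.2
    rw [← heq] at hm
    exact FFel_not_mem hr.1.le hr.2 hm

end Witness

end ChainAux

/-- The ring of entire functions contains a chain of distinct prime ideals of cardinality
continuum; in particular its Krull dimension is at least the cardinality of the continuum. -/
theorem entire_functions_continuum_chain_of_primes :
    ∃ C : Set (Ideal entireRing), (∀ P ∈ C, P.IsPrime) ∧ IsChain (· ≤ ·) C ∧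
      Cardinal.mk C = Cardinal.continuum := by
  classical
  refine ⟨ChainAux.chainIdeal '' Set.Ioo (0:ℝ) 1, ?_, ?_, ?_⟩
  · rintro P ⟨r, hr, rfl⟩
    exact ChainAux.chainIdeal_isPrime hr.1.le
  · rintro _ ⟨r, hr, rfl⟩ _ ⟨s, hs, rfl⟩ _
    rcases le_total r s with h | h
    · exact Or.inr (ChainAux.chainIdeal_antitone h)
    · exact Or.inl (ChainAux.chainIdeal_antitone h)
  · rw [Cardinal.mk_image_eq_of_injOn _ _ ChainAux.chainIdeal_injOn,
      Cardinal.mk_Ioo_real (by norm_num : (0:ℝ) < 1)]
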